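/- Let E and F be n×n idempotent matrices with nonnegative real entries such that every entry of EF - FE is nonnegative. Then (FE)²F = FEF. -/
import Mathlib

lemma myMulLeftMono {n : ℕ} {A X Y : Matrix (Fin n) (Fin n) ℝ}
    (hA : ∀ i j, 0 ≤ A i j) (h : ∀ i j, X i j ≤ Y i j) :
    ∀ i j, (A * X) i j ≤ (A * Y) i j := by
  intro i j
  simp only [Matrix.mul_apply]
  exact Finset.sum_le_sum fun k _ => mul_le_mul_of_nonneg_left (h k j) (hA i k)

lemma myMulRightMono {n : ℕ} {A X Y : Matrix (Fin n) (Fin n) ℝ}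
    (hA : ∀ i j, 0 ≤ A i j) (h : ∀ i j, X i j ≤ Y i j) :
    ∀ i j, (X * A) i j ≤ (Y * A) i j := by
  intro i j
  simp only [Matrix.mul_apply]
  exact Finset.sum_le_sum fun k _ => mul_le_mul_of_nonneg_right (h i k) (hA k j)

theorem stmt_1 (n : ℕ) (E F : Matrix (Fin n) (Fin n) ℝ)
    (hE : E * E = E) (hF : F * F = F)
    (hEpos : ∀ i j, 0 ≤ E i j) (hFpos : ∀ i j, 0 ≤ F i j)
    (hcomm : ∀ i j, (F * E) i j ≤ (E * F) i j) :
    (F * E) * (F * E) * F = F * E * F := by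
  -- (EF)^2 ≤ EF
  have h1 : ∀ i j, ((E * F) * (E * F)) i j ≤ (E * F) i j := by
    have := myMulRightMono hFpos (myMulLeftMono hEpos hcomm)
    intro i j
    have h := this i j
    calc ((E * F) * (E * F)) i j = (E * (F * E) * F) i j := by rw [show (E*F)*(E*F) = E*(F*E)*F from by noncomm_ring]
    _ ≤ (E * (E * F) * F) i j := h
    _ = (E * F) i j := by rw [show E*(E*F)*F = (E*E)*(F*F) from by noncomm_ring, hE, hF]
  -- FE ≤ (FE)^2
  have h2 : ∀ i j, (F * E) i j ≤ ((F * E) * (F * E)) i j := by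
    have := myMulRightMono hEpos (myMulLeftMono hFpos hcomm)
    intro i j
    have h := this i j
    calc (F * E) i j = (F * (F * E) * E) i j := by
          rw [show F*(F*E)*E = (F*F)*(E*E) from by noncomm_ring, hE, hF]
    _ ≤ (F * (E * F) * E) i j := h
    _ = ((F * E) * (F * E)) i j := by rw [show F*(E*F)*E = (F*E)*(F*E) from by noncomm_ring]
  ext i j
  refine le_antisymm ?_ ?_
  · have := myMulLeftMono hFpos h1 i j
    calc ((F * E) * (F * E) * F) i j = (F * ((E * F) * (E * F))) i j := by rw [show (F*E)*(F*E)*F = F*((E*F)*(E*F)) from by noncomm_ring]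
    _ ≤ (F * (E * F)) i j := this
    _ = (F * E * F) i j := by rw [mul_assoc]
  · have := myMulRightMono hFpos h2 i j
    calc (F * E * F) i j ≤ ((F * E) * (F * E) * F) i j := this
    _ = ((F * E) * (F * E) * F) i j := rfl
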